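/- If f(t,ε) satisfies the Riccati equation ε f'(t) = λ(t)(1 - f(t)²) + ε λ(t)⁻¹ λ'(t) f(t) with f(t,0) = 1, where λ(t) = i√(μ(t)) and μ(t) > 0, then the change of variables x = f u + f̄ v, y = λ u - λ v transforms the system ε x' = y, ε y' = -μ(t) x into the diagonal system ε u' = ν u, ε v' = ν̄ v with ν(t,ε) = λ(t) f(t,ε) - ε λ(t)⁻¹ λ'(t). -/

import Mathlib

/-- If `f` satisfies the Riccati equation
`ε f' = λ (1 - f²) + ε λ⁻¹ λ' f` where `λ(t) = i √(μ t)` with `μ > 0`, then the change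
of variables `x = f u + conj f · v`, `y = λ u - λ v` transforms the system
`ε x' = y`, `ε y' = -μ x` into the diagonal system `ε u' = ν u`, `ε v' = conj ν · v`
with `ν = λ f - ε λ⁻¹ λ'`. -/
theorem stmt_0 (μ : ℝ → ℝ) (lam f u v ν : ℝ → ℂ) (ε : ℝ) (hε : 0 < ε)
    (hμpos : ∀ t, 0 < μ t) (hμ : Differentiable ℝ μ)
    (hlam : ∀ t, lam t = Complex.I * Real.sqrt (μ t))
    (hf : Differentiable ℝ f)
    (hfne : ∀ t, f t + (starRingEnd ℂ) (f t) ≠ 0)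
    (hric : ∀ t, (ε : ℂ) * deriv f t
      = lam t * (1 - f t ^ 2) + (ε : ℂ) * (lam t)⁻¹ * deriv lam t * f t)
    (hν : ∀ t, ν t = lam t * f t - (ε : ℂ) * (lam t)⁻¹ * deriv lam t)
    (hu : Differentiable ℝ u) (hv : Differentiable ℝ v)
    (hueq : ∀ t, (ε : ℂ) * deriv u t = ν t * u t)
    (hveq : ∀ t, (ε : ℂ) * deriv v t = (starRingEnd ℂ) (ν t) * v t) :
    ∀ t : ℝ,
      (ε : ℂ) * deriv (fun s => f s * u s + (starRingEnd ℂ) (f s) * v s) t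
        = lam t * u t - lam t * v t ∧
      (ε : ℂ) * deriv (fun s => lam s * u s - lam s * v s) t
        = -(μ t : ℂ) * (f t * u t + (starRingEnd ℂ) (f t) * v t) := by
  have hlamD : Differentiable ℝ lam := by
    have h1 : Differentiable ℝ (fun t => Real.sqrt (μ t)) := fun t =>
      (hμ t).sqrt (ne_of_gt (hμpos t))
    have h2 : Differentiable ℝ (fun t => Complex.I * (Real.sqrt (μ t) : ℂ)) :=
      (Complex.ofRealCLM.differentiable.comp h1).const_mul _
    have : (fun t => Complex.I * (Real.sqrt (μ t) : ℂ)) = lam := by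
      funext t; rw [hlam t]
    rwa [this] at h2
  have hconjL : ∀ s, (starRingEnd ℂ) (lam s) = - lam s := by
    intro s; rw [hlam s]; simp [Complex.conj_ofReal]
  intro t
  have hft := (hf t).hasDerivAt
  have hut := (hu t).hasDerivAt
  have hvt := (hv t).hasDerivAt
  have hlt := (hlamD t).hasDerivAt
  have hL0 : lam t ≠ 0 := by
    rw [hlam t]
    exact mul_ne_zero Complex.I_ne_zero (by
      exact_mod_cast (Real.sqrt_pos.mpr (hμpos t)).ne')
  have hL2 : lam t ^ 2 = -(μ t : ℂ) := by
    rw [hlam t, mul_pow, Complex.I_sq, ← Complex.ofReal_pow,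
      Real.sq_sqrt (hμpos t).le]
    ring
  have hconjL' : (starRingEnd ℂ) (deriv lam t) = - deriv lam t := by
    have h1 : HasDerivAt (fun s => (starRingEnd ℂ) (lam s)) ((starRingEnd ℂ) (deriv lam t)) t := hlt.star
    have h2 : HasDerivAt (fun s => (starRingEnd ℂ) (lam s)) (- deriv lam t) t := by
      have := hlt.neg
      apply this.congr_of_eventuallyEq
      filter_upwards with s using (hconjL s)
    exact h1.unique h2
  -- conjugated Riccati
  have hric' : (ε : ℂ) * (starRingEnd ℂ) (deriv f t)
      = -lam t * (1 - (starRingEnd ℂ) (f t) ^ 2)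
        + (ε : ℂ) * (lam t)⁻¹ * deriv lam t * (starRingEnd ℂ) (f t) := by
    have := congrArg (starRingEnd ℂ) (hric t)
    simpa [map_add, map_mul, map_sub, map_pow, map_one, map_inv₀,
      Complex.conj_ofReal, hconjL, hconjL', inv_neg, mul_neg, neg_mul, neg_neg] using this
  have hνt : ν t = lam t * f t - (ε : ℂ) * (lam t)⁻¹ * deriv lam t := hν t
  have hνc : (starRingEnd ℂ) (ν t)
      = -(lam t * (starRingEnd ℂ) (f t)) - (ε : ℂ) * (lam t)⁻¹ * deriv lam t := by
    rw [hνt]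
    simp [map_mul, map_sub, map_inv₀, Complex.conj_ofReal, hconjL, hconjL']
  have hU := hueq t; rw [hνt] at hU
  have hV := hveq t; rw [hνc] at hV
  have hinv : lam t * (lam t)⁻¹ = 1 := mul_inv_cancel₀ hL0
  have hdx : deriv (fun s => f s * u s + (starRingEnd ℂ) (f s) * v s) t
      = deriv f t * u t + f t * deriv u t
        + ((starRingEnd ℂ) (deriv f t) * v t + (starRingEnd ℂ) (f t) * deriv v t) := by
    exact ((hft.mul hut).add (hft.star.mul hvt)).deriv
  have hdy : deriv (fun s => lam s * u s - lam s * v s) t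
      = (deriv lam t * u t + lam t * deriv u t)
        - (deriv lam t * v t + lam t * deriv v t) := by
    exact ((hlt.mul hut).sub (hlt.mul hvt)).deriv
  constructor
  · rw [hdx]
    linear_combination u t * hric t + v t * hric' + f t * hU + (starRingEnd ℂ) (f t) * hV
  · rw [hdy]
    linear_combination lam t * hU - lam t * hV
      + (u t * f t + v t * (starRingEnd ℂ) (f t)) * hL2
      - ((ε:ℂ) * deriv lam t * u t - (ε:ℂ) * deriv lam t * v t) * hinv
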